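/- arXiv:1209.4053 — 5 statements merged into one kernel-verified Lean document; each statement's English description precedes it below -/
import Mathlib

section
/- For every number of spheres n ≥ 2 and dimension d ≥ 2, the maximal radius function G has only finitely many local maximal values: the set {G(x*) : x* is a local maximum of G with G(x*) > 0} is finite, of cardinality at most 2^{N(n,d)} where N(n,d) = n(n−1)/2 + 2nd. In particular, there are only finitely many radii at which jammed configurations of n spheres in [0,1]^d can occur. -/
open scoped BigOperators RealInnerProductSpace

/-- Euclidean distance between the `i`-th and `j`-th blocks of a configuration
`x ∈ ℝ^{dn}` of `n` points in `ℝ^d`. -/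
noncomputable def pairDist (n d : ℕ) (x : EuclideanSpace ℝ (Fin n × Fin d))
    (i j : Fin n) : ℝ :=
  Real.sqrt (∑ k : Fin d, (x (i, k) - x (j, k)) ^ 2)

/-- Index set for the family `F`: pairs `i < j` (functions `φ_{ij}`), together with
two copies of `Fin n × Fin d` (functions `ψ_{ik}` and `ψ^{ik}`). -/
def Idx (n d : ℕ) : Type :=
  {p : Fin n × Fin n // p.1 < p.2} ⊕ ((Fin n × Fin d) ⊕ (Fin n × Fin d))

/-- The family `F` of functions: `φ_{ij}(x) = |x_i - x_j|/2`, `ψ_{ik}(x) = x_{ik}`,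
`ψ^{ik}(x) = 1 - x_{ik}`. -/
noncomputable def famF (n d : ℕ) : Idx n d → EuclideanSpace ℝ (Fin n × Fin d) → ℝ
  | Sum.inl p => fun x => pairDist n d x p.1.1 p.1.2 / 2
  | Sum.inr (Sum.inl q) => fun x => x q
  | Sum.inr (Sum.inr q) => fun x => 1 - x q

/-- The maximal radius function `G(x) = min_{f ∈ F} f(x)`. -/
noncomputable def maxRad (n d : ℕ) (x : EuclideanSpace ℝ (Fin n × Fin d)) : ℝ :=
  ⨅ l : Idx n d, famF n d l x

/-- `x` is an `r`-admissible configuration: pairwise distances at least `2r` and all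
coordinates in `[r, 1-r]`. `M_n^d(r)` is the set of `r`-admissible configurations. -/
def Admissible (n d : ℕ) (r : ℝ) (x : EuclideanSpace ℝ (Fin n × Fin d)) : Prop :=
  (∀ i j : Fin n, i ≠ j → 2 * r ≤ pairDist n d x i j) ∧
  ∀ q : Fin n × Fin d, r ≤ x q ∧ x q ≤ 1 - r

section JammingAux

-- auxiliary
def idxEquiv (n d : ℕ) : Idx n d ≃
    ({p : Fin n × Fin n // p.1 < p.2} ⊕ ((Fin n × Fin d) ⊕ (Fin n × Fin d))) :=
  Equiv.refl _

instance (n d : ℕ) : Fintype (Idx n d) :=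
  Fintype.ofEquiv _ (idxEquiv n d).symm

def pairEquiv (n : ℕ) : {p : Fin n × Fin n // p.1 < p.2} ≃ Σ j : Fin n, Fin j.1 where
  toFun := fun p => ⟨p.1.2, ⟨p.1.1, p.2⟩⟩
  invFun := fun s => ⟨(⟨s.2.1, lt_trans s.2.2 s.1.2⟩, s.1), s.2.2⟩
  left_inv := fun p => by
    ext <;> rfl
  right_inv := fun s => by
    rcases s with ⟨j, k⟩; rfl

lemma card_idx (n d : ℕ) : Fintype.card (Idx n d) = n * (n - 1) / 2 + 2 * n * d := by
  rw [Fintype.card_congr (idxEquiv n d)]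
  rw [Fintype.card_sum, Fintype.card_sum, Fintype.card_prod, Fintype.card_fin, Fintype.card_fin]
  rw [Fintype.card_congr (pairEquiv n), Fintype.card_sigma]
  simp only [Fintype.card_fin]
  rw [Fin.sum_univ_eq_sum_range (fun i => i) n, Finset.sum_range_id]
  ring

variable {n d : ℕ}

noncomputable def gradF (n d : ℕ) (x : EuclideanSpace ℝ (Fin n × Fin d)) :
    Idx n d → EuclideanSpace ℝ (Fin n × Fin d)
  | Sum.inl p => ∑ k : Fin d,
      ((x (p.1.1, k) - x (p.1.2, k)) / (2 * pairDist n d x p.1.1 p.1.2)) •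
        (EuclideanSpace.single (p.1.1, k) (1:ℝ) - EuclideanSpace.single (p.1.2, k) (1:ℝ))
  | Sum.inr (Sum.inl q) => EuclideanSpace.single q (1:ℝ)
  | Sum.inr (Sum.inr q) => -EuclideanSpace.single q (1:ℝ)

lemma pairDist_nonneg (x : EuclideanSpace ℝ (Fin n × Fin d)) (i j : Fin n) :
    0 ≤ pairDist n d x i j := Real.sqrt_nonneg _

lemma famF_tangent (x z : EuclideanSpace ℝ (Fin n × Fin d)) (l : Idx n d)
    (hl : 0 < famF n d l x) :
    famF n d l x + ⟪gradF n d x l, z - x⟫ ≤ famF n d l z := by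
  rcases l with p | q | q
  · -- pair case
    obtain ⟨⟨i, j⟩, hij⟩ := p
    simp only [famF] at hl ⊢
    set D := pairDist n d x i j with hDdef
    have hD : 0 < D := by linarith
    have hne : i ≠ j := ne_of_lt hij
    set u : Fin d → ℝ := fun k => x (i, k) - x (j, k) with hu
    set v : Fin d → ℝ := fun k => z (i, k) - z (j, k) with hv
    have hD2 : D ^ 2 = ∑ k : Fin d, u k ^ 2 := by
      rw [hDdef]; unfold pairDist
      rw [Real.sq_sqrt (Finset.sum_nonneg fun k _ => sq_nonneg _)]
    -- compute the inner product
    have hinner : ⟪gradF n d x (Sum.inl ⟨(i, j), hij⟩), z - x⟫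
        = ∑ k : Fin d, (u k / (2 * D)) * (v k - u k) := by
      simp only [gradF]
      rw [sum_inner]
      refine Finset.sum_congr rfl fun k _ => ?_
      rw [real_inner_smul_left, inner_sub_left, EuclideanSpace.inner_single_left,
        EuclideanSpace.inner_single_left]
      have h1 : (z - x) (i, k) = z (i, k) - x (i, k) := rfl
      have h2 : (z - x) (j, k) = z (j, k) - x (j, k) := rfl
      simp only [map_one, one_mul, h1, h2]
      simp only [hu, hv]
      ring
    have hz : pairDist n d z i j = Real.sqrt (∑ k : Fin d, v k ^ 2) := rfl
    have hsum : ∑ k : Fin d, (u k / (2 * D)) * (v k - u k)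
        = ((∑ k : Fin d, u k * v k) - D ^ 2) / (2 * D) := by
      have h3 : ∀ k : Fin d, (u k / (2 * D)) * (v k - u k)
          = (u k * v k) / (2 * D) - u k ^ 2 / (2 * D) := by
        intro k; field_simp
      rw [Finset.sum_congr rfl fun k _ => h3 k, Finset.sum_sub_distrib,
        ← Finset.sum_div, ← Finset.sum_div, hD2, sub_div]
    have hCS : ∑ k : Fin d, u k * v k ≤ D * Real.sqrt (∑ k : Fin d, v k ^ 2) := by
      have h1 : (∑ k : Fin d, u k * v k) ≤ Real.sqrt ((∑ k : Fin d, u k * v k) ^ 2) := by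
        rw [Real.sqrt_sq_eq_abs]; exact le_abs_self _
      have h2 := Finset.sum_mul_sq_le_sq_mul_sq Finset.univ u v
      have h4 : Real.sqrt ((∑ k : Fin d, u k * v k) ^ 2)
          ≤ Real.sqrt ((∑ k : Fin d, u k ^ 2) * ∑ k : Fin d, v k ^ 2) :=
        Real.sqrt_le_sqrt h2
      have h5 : Real.sqrt ((∑ k : Fin d, u k ^ 2) * ∑ k : Fin d, v k ^ 2)
          = D * Real.sqrt (∑ k : Fin d, v k ^ 2) := by
        rw [Real.sqrt_mul (Finset.sum_nonneg fun k _ => sq_nonneg _), ← hD2,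
          Real.sqrt_sq hD.le]
      linarith
    rw [hinner, hz, hsum]
    have hDne : (2 : ℝ) * D ≠ 0 := by positivity
    have hexp : D / 2 + ((∑ k : Fin d, u k * v k) - D ^ 2) / (2 * D)
        = (∑ k : Fin d, u k * v k) / (2 * D) := by
      field_simp; ring
    rw [hexp, div_le_div_iff₀ (by positivity) (by norm_num : (0:ℝ) < 2)]
    have hsq : 0 ≤ Real.sqrt (∑ k : Fin d, v k ^ 2) := Real.sqrt_nonneg _
    nlinarith [hCS]
  · simp only [famF, gradF, EuclideanSpace.inner_single_left, map_one, one_mul]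
    have h1 : (z - x) q = z q - x q := rfl
    rw [h1]; linarith
  · simp only [famF, gradF, inner_neg_left, EuclideanSpace.inner_single_left, map_one, one_mul]
    have h1 : (z - x) q = z q - x q := rfl
    rw [h1]; linarith

lemma continuous_famF (l : Idx n d) : Continuous (famF n d l) := by
  have hcoord : ∀ q : Fin n × Fin d,
      Continuous fun x : EuclideanSpace ℝ (Fin n × Fin d) => x q := by
    intro q
    exact (continuous_apply q).comp (PiLp.continuous_ofLp (p := 2) (β := fun _ : Fin n × Fin d => ℝ))
  rcases l with p | q | q
  · refine Continuous.div_const ?_ 2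
    unfold pairDist
    exact Real.continuous_sqrt.comp <| continuous_finset_sum _ fun k _ =>
      ((hcoord (p.1.1, k)).sub (hcoord (p.1.2, k))).pow 2
  · exact hcoord q
  · exact continuous_const.sub (hcoord q)

lemma maxRad_le (x : EuclideanSpace ℝ (Fin n × Fin d)) (l : Idx n d) :
    maxRad n d x ≤ famF n d l x :=
  ciInf_le (Set.finite_range _).bddBelow l

lemma exists_active (hn : 2 ≤ n) (hd : 2 ≤ d) (x : EuclideanSpace ℝ (Fin n × Fin d)) :
    ∃ l, maxRad n d x = famF n d l x := by
  have hne : Nonempty (Idx n d) :=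
    ⟨Sum.inr (Sum.inl (⟨0, by omega⟩, ⟨0, by omega⟩))⟩
  obtain ⟨l, hl⟩ := Finite.exists_min (fun l => famF n d l x)
  exact ⟨l, le_antisymm (maxRad_le x l) (le_ciInf hl)⟩

lemma zero_mem_hull (hn : 2 ≤ n) (hd : 2 ≤ d) (x : EuclideanSpace ℝ (Fin n × Fin d))
    (hx : IsLocalMax (maxRad n d) x) (h0 : 0 < maxRad n d x) :
    (0 : EuclideanSpace ℝ (Fin n × Fin d)) ∈
      convexHull ℝ (gradF n d x '' {l | famF n d l x = maxRad n d x}) := by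
  by_contra hcon
  set r := maxRad n d x with hr
  set T := gradF n d x '' {l | famF n d l x = r} with hT
  have hTfin : T.Finite := (Set.toFinite _).image _
  obtain ⟨f, c, hfc, hsep⟩ := geometric_hahn_banach_point_closed
    (convex_convexHull ℝ T) (hTfin.isClosed_convexHull (𝕜 := ℝ)) hcon
  have hc : 0 < c := by simpa using hfc
  set w := (InnerProductSpace.toDual ℝ (EuclideanSpace ℝ (Fin n × Fin d))).symm f with hwdef
  have hw : ∀ v, ⟪w, v⟫ = f v := fun v => InnerProductSpace.toDual_symm_apply
  set γ : ℝ → EuclideanSpace ℝ (Fin n × Fin d) := fun t => x + t • w with hγ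
  have hγcont : Continuous γ := continuous_const.add (continuous_id.smul continuous_const)
  have hγ0 : γ 0 = x := by simp [hγ]
  have hγtend : Filter.Tendsto γ (nhds 0) (nhds x) := by
    have := hγcont.tendsto 0
    rwa [hγ0] at this
  have h1 : ∀ᶠ t in nhds (0:ℝ), maxRad n d (γ t) ≤ r := hγtend.eventually hx
  have h2 : ∀ᶠ t in nhds (0:ℝ), ∀ l : Idx n d, famF n d l x ≠ r → r < famF n d l (γ t) := by
    rw [Filter.eventually_all]
    intro l
    by_cases hcase : famF n d l x = r
    · exact Filter.Eventually.of_forall fun t h => absurd hcase h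
    · have hlt : r < famF n d l x := lt_of_le_of_ne (maxRad_le x l) (Ne.symm hcase)
      have := ((continuous_famF l).comp hγcont).tendsto 0
      rw [Function.comp_apply, hγ0] at this
      filter_upwards [this.eventually (eventually_gt_nhds hlt)] with t ht _
      exact ht
  have h3 : ∀ᶠ t in nhdsWithin (0:ℝ) (Set.Ioi 0),
      maxRad n d (γ t) ≤ r ∧ (∀ l : Idx n d, famF n d l x ≠ r → r < famF n d l (γ t))
        ∧ 0 < t := by
    filter_upwards [(h1.and h2).filter_mono nhdsWithin_le_nhds,
      self_mem_nhdsWithin] with t ht ht'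
    exact ⟨ht.1, ht.2, ht'⟩
  obtain ⟨t, hle, hinact, htpos⟩ := h3.exists
  -- all functions exceed r at γ t
  have hall : ∀ l : Idx n d, r < famF n d l (γ t) := by
    intro l
    by_cases hcase : famF n d l x = r
    · -- active: use tangent inequality
      have hglu : c < ⟪gradF n d x l, w⟫ := by
        rw [real_inner_comm, hw]
        exact hsep _ (subset_convexHull ℝ T ⟨l, hcase, rfl⟩)
      have htan := famF_tangent x (γ t) l (by rw [hcase]; exact h0)
      have hsub : γ t - x = t • w := by simp [hγ]
      rw [hsub, real_inner_smul_right, hcase] at htan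
      nlinarith
    · exact hinact l hcase
  obtain ⟨l₀, hl₀⟩ := exists_active hn hd (γ t)
  rw [hl₀] at hle
  exact absurd (hall l₀) (not_lt.mpr hle)

lemma value_le (hn : 2 ≤ n) (hd : 2 ≤ d) (x y : EuclideanSpace ℝ (Fin n × Fin d))
    (hy : IsLocalMax (maxRad n d) y) (h0x : 0 < maxRad n d x) (h0y : 0 < maxRad n d y)
    (hS : {l : Idx n d | famF n d l x = maxRad n d x}
        = {l : Idx n d | famF n d l y = maxRad n d y}) :
    maxRad n d y ≤ maxRad n d x := by
  set r := maxRad n d x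
  set r' := maxRad n d y
  have hhull := zero_mem_hull hn hd y hy h0y
  set H : Set (EuclideanSpace ℝ (Fin n × Fin d)) := {g | ⟪g, x - y⟫ ≤ r - r'} with hH
  have hconv : Convex ℝ H := by
    refine convex_halfSpace_le ?_ _
    exact ⟨fun a b => inner_add_left _ _ _, fun c a => real_inner_smul_left _ _ _⟩
  have hsub : gradF n d y '' {l | famF n d l y = r'} ⊆ H := by
    rintro g ⟨l, hl, rfl⟩
    have hlx : famF n d l x = r := by
      have : l ∈ {l : Idx n d | famF n d l y = maxRad n d y} := hl
      rw [← hS] at this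
      exact this
    have htan := famF_tangent y x l (by rw [hl]; exact h0y)
    rw [hl, hlx] at htan
    show ⟪gradF n d y l, x - y⟫ ≤ r - r'
    linarith
  have h0H : (0 : EuclideanSpace ℝ (Fin n × Fin d)) ∈ H :=
    convexHull_min hsub hconv hhull
  have h00 : ⟪(0 : EuclideanSpace ℝ (Fin n × Fin d)), x - y⟫ ≤ r - r' := h0H
  rw [inner_zero_left] at h00
  linarith

end JammingAux

/-- For every `n ≥ 2` and `d ≥ 2`, the maximal radius function `G` has only finitely
many positive local maximal values, at most `2 ^ (n(n-1)/2 + 2nd)` many. -/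
theorem finitely_many_jamming_radii (n d : ℕ) (hn : 2 ≤ n) (hd : 2 ≤ d) :
    {r : ℝ | 0 < r ∧ ∃ x : EuclideanSpace ℝ (Fin n × Fin d),
        IsLocalMax (maxRad n d) x ∧ maxRad n d x = r}.Finite ∧
    {r : ℝ | 0 < r ∧ ∃ x : EuclideanSpace ℝ (Fin n × Fin d),
        IsLocalMax (maxRad n d) x ∧ maxRad n d x = r}.ncard
      ≤ 2 ^ (n * (n - 1) / 2 + 2 * n * d) := by
  classical
  set A := {r : ℝ | 0 < r ∧ ∃ x : EuclideanSpace ℝ (Fin n × Fin d),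
      IsLocalMax (maxRad n d) x ∧ maxRad n d x = r} with hA
  have hwit : ∀ r : ℝ, r ∈ A →
      ∃ x : EuclideanSpace ℝ (Fin n × Fin d),
        IsLocalMax (maxRad n d) x ∧ maxRad n d x = r := fun r hr => hr.2
  choose! xw hx1 hx2 using hwit
  set F : ℝ → Finset (Idx n d) :=
    fun r => Finset.univ.filter fun l => famF n d l (xw r) = r with hF
  have hinj : Set.InjOn F A := by
    intro r hr r' hr' hFe
    have hiff : ∀ l : Idx n d, famF n d l (xw r) = r ↔ famF n d l (xw r') = r' := by
      intro l
      have := Finset.ext_iff.mp hFe l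
      simpa only [hF, Finset.mem_filter, Finset.mem_univ, true_and] using this
    have hset : {l : Idx n d | famF n d l (xw r) = maxRad n d (xw r)}
        = {l : Idx n d | famF n d l (xw r') = maxRad n d (xw r')} := by
      ext l
      rw [Set.mem_setOf_eq, Set.mem_setOf_eq, hx2 r hr, hx2 r' hr']
      exact hiff l
    have h0r : 0 < maxRad n d (xw r) := by rw [hx2 r hr]; exact hr.1
    have h0r' : 0 < maxRad n d (xw r') := by rw [hx2 r' hr']; exact hr'.1
    have h1 := value_le hn hd (xw r) (xw r') (hx1 r' hr') h0r h0r' hset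
    have h2 := value_le hn hd (xw r') (xw r) (hx1 r hr) h0r' h0r hset.symm
    rw [hx2 r hr, hx2 r' hr'] at h1 h2
    linarith
  have hfin : A.Finite := Set.Finite.of_finite_image (Set.toFinite _) hinj
  refine ⟨hfin, ?_⟩
  calc A.ncard = (F '' A).ncard := (Set.ncard_image_of_injOn hinj).symm
    _ ≤ (Set.univ : Set (Finset (Idx n d))).ncard :=
        Set.ncard_le_ncard (Set.subset_univ _) Set.finite_univ
    _ = Fintype.card (Finset (Idx n d)) := by rw [Set.ncard_univ, Nat.card_eq_fintype_card]
    _ = 2 ^ Fintype.card (Idx n d) := Fintype.card_finset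
    _ = 2 ^ (n * (n - 1) / 2 + 2 * n * d) := by rw [card_idx]
end

section
/- Let f_1,…,f_N : ℝ^m → ℝ be continuous functions each differentiable at a point x, let G(y) = min_{1 ≤ l ≤ N} f_l(y), and let L(x) = {l : f_l(x) = G(x)} be the active index set. Then for every direction v ∈ ℝ^m, the function t ↦ G(x + t v) has a one-sided (right) derivative at t = 0 equal to min_{l ∈ L(x)} ⟨∇f_l(x), v⟩. -/
open scoped RealInnerProductSpace

/-- For continuous functions `f₁, …, f_N` differentiable at `x`, the minimum
`G(y) = min_l f_l(y)` has, in every direction `v`, a one-sided right directional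
derivative at `x` equal to `min_{l active} ⟨∇f_l(x), v⟩`. -/
theorem min_right_directional_deriv (m N : ℕ) (hN : 1 ≤ N)
    (f : Fin N → EuclideanSpace ℝ (Fin m) → ℝ)
    (hc : ∀ l, Continuous (f l)) (x : EuclideanSpace ℝ (Fin m))
    (hdiff : ∀ l, DifferentiableAt ℝ (f l) x) (v : EuclideanSpace ℝ (Fin m)) :
    Filter.Tendsto
      (fun t : ℝ => ((⨅ l, f l (x + t • v)) - ⨅ l, f l x) / t)
      (nhdsWithin 0 (Set.Ioi 0))
      (nhds (⨅ l : {l : Fin N // f l x = ⨅ l', f l' x}, ⟪gradient (f l) x, v⟫)) := by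
  haveI hNe : Nonempty (Fin N) := Fin.pos_iff_nonempty.mp hN
  set S := {l : Fin N // f l x = ⨅ l', f l' x} with hS
  haveI hSne : Nonempty S := by
    obtain ⟨l, hl⟩ := exists_eq_ciInf_of_finite (f := fun l => f l x)
    exact ⟨⟨l, hl⟩⟩
  -- curve continuity
  have hcurve : Continuous (fun t : ℝ => x + t • v) :=
    continuous_const.add (continuous_id.smul continuous_const)
  -- relate iInf over Fin N with Finset.inf'
  have hinf : ∀ y, (⨅ l, f l y) =
      (Finset.univ : Finset (Fin N)).inf' Finset.univ_nonempty (fun l => f l y) :=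
    fun y => (Finset.inf'_univ_eq_ciInf _).symm
  -- each difference quotient tends to the directional derivative
  have hq : ∀ l : Fin N, Filter.Tendsto (fun t : ℝ => (f l (x + t • v) - f l x) / t)
      (nhdsWithin 0 (Set.Ioi 0)) (nhds ⟪gradient (f l) x, v⟫) := by
    intro l
    have hcurve' : HasDerivAt (fun t : ℝ => x + t • v) v 0 := by
      simpa using ((hasDerivAt_id (0 : ℝ)).smul_const v).const_add x
    have hg := (hdiff l).hasGradientAt.hasFDerivAt
    have hD : HasDerivAt (fun t : ℝ => f l (x + t • v)) ⟪gradient (f l) x, v⟫ 0 := by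
      have hx : x + (0 : ℝ) • v = x := by simp
      have := (hx ▸ hg : HasFDerivAt (f l) _ (x + (0 : ℝ) • v)).comp_hasDerivAt 0 hcurve'
      simpa [InnerProductSpace.toDual_apply_apply, Function.comp_def] using this
    have := (hasDerivAt_iff_tendsto_slope.mp hD).mono_left
      (nhdsWithin_mono 0 (fun t (ht : t ∈ Set.Ioi 0) => ne_of_gt ht))
    refine this.congr fun t => ?_
    simp [slope_def_field, div_eq_inv_mul]
  -- Step A: the min over active indices of quotients converges to the target
  have hA : Filter.Tendsto
      (fun t : ℝ => (Finset.univ : Finset S).inf' Finset.univ_nonempty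
        (fun l => (f l.1 (x + t • v) - f l.1 x) / t))
      (nhdsWithin 0 (Set.Ioi 0))
      (nhds ((Finset.univ : Finset S).inf' Finset.univ_nonempty
        (fun l => ⟪gradient (f l.1) x, v⟫))) :=
    Filter.Tendsto.finset_inf'_nhds_apply _ (fun l _ => hq l.1)
  rw [show (⨅ l : S, ⟪gradient (f l.1) x, v⟫) = (Finset.univ : Finset S).inf' Finset.univ_nonempty (fun l => ⟪gradient (f l.1) x, v⟫) from (Finset.inf'_univ_eq_ciInf _).symm]
  -- Step B: eventually, every non-active index is beaten by some active index
  have hP : ∀ᶠ t : ℝ in nhds 0, ∀ l : Fin N,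
      (Finset.univ : Finset S).inf' Finset.univ_nonempty (fun l' => f l'.1 (x + t • v))
        ≤ f l (x + t • v) := by
    rw [Filter.eventually_all]
    intro l
    by_cases hl : f l x = ⨅ l', f l' x
    · exact Filter.Eventually.of_forall fun t =>
        Finset.inf'_le _ (Finset.mem_univ (⟨l, hl⟩ : S))
    · have h0 : (fun t : ℝ => (Finset.univ : Finset S).inf' Finset.univ_nonempty
          (fun l' => f l'.1 (x + t • v))) 0 < (fun t : ℝ => f l (x + t • v)) 0 := by
        obtain ⟨l₀⟩ := id hSne
        simp only [zero_smul, add_zero]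
        calc (Finset.univ : Finset S).inf' Finset.univ_nonempty (fun l' => f l'.1 x)
            ≤ f l₀.1 x := Finset.inf'_le _ (Finset.mem_univ l₀)
          _ = ⨅ l', f l' x := l₀.2
          _ < f l x := by
              refine lt_of_le_of_ne ?_ (Ne.symm hl)
              rw [← Finset.inf'_univ_eq_ciInf]
              exact Finset.inf'_le _ (Finset.mem_univ l)
      have hcont1 : ContinuousAt (fun t : ℝ => (Finset.univ : Finset S).inf'
          Finset.univ_nonempty (fun l' => f l'.1 (x + t • v))) 0 :=
        ContinuousAt.finset_inf'_apply _ fun l' _ => ((hc l'.1).comp hcurve).continuousAt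
      have hcont2 : ContinuousAt (fun t : ℝ => f l (x + t • v)) 0 :=
        ((hc l).comp hcurve).continuousAt
      exact (hcont1.eventually_lt hcont2 h0).mono fun t ht => ht.le
  -- conclude by eventual equality of the two sequences
  refine hA.congr' ?_
  filter_upwards [self_mem_nhdsWithin, nhdsWithin_le_nhds hP] with t ht hPt
  have ht0 : (0 : ℝ) < t := ht
  -- the global min equals the min over active indices
  have h1 : (⨅ l, f l (x + t • v)) =
      (Finset.univ : Finset S).inf' Finset.univ_nonempty (fun l' => f l'.1 (x + t • v)) := by
    rw [← Finset.inf'_univ_eq_ciInf]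
    refine le_antisymm ?_ ?_
    · exact Finset.le_inf' _ _ fun l' _ => Finset.inf'_le _ (Finset.mem_univ l'.1)
    · exact Finset.le_inf' _ _ fun l _ => hPt l
  rw [h1]
  -- pull the affine map through the min
  have h2 := Finset.apply_inf'_eq_inf'_comp (Finset.univ_nonempty (α := S))
      (f := fun l' : S => f l'.1 (x + t • v))
      (fun a : ℝ => (a - ⨅ l', f l' x) / t) ?_
  · rw [h2]
    refine Finset.inf'_congr _ rfl fun l' _ => ?_
    simp only [Function.comp]
    rw [l'.2]
  · intro a b
    show (min a b - ⨅ l', f l' x) / t = min ((a - ⨅ l', f l' x) / t) ((b - ⨅ l', f l' x) / t)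
    rw [← min_sub_sub_right, ← min_div_div_right ht0.le]
end

section
/- Let f_1,…,f_N : ℝ^m → ℝ be continuous functions each differentiable at x*, let G(y) = min_{1 ≤ l ≤ N} f_l(y), and let L(x*) = {l : f_l(x*) = G(x*)}. If x* is a local maximum of G, then there is no direction v ∈ ℝ^m with ⟨∇f_l(x*), v⟩ > 0 for all l ∈ L(x*). -/
open scoped RealInnerProductSpace

open Filter Topology

/-- If `x*` is a local maximum of `G(y) = min_l f_l(y)` with each `f_l` continuous and
differentiable at `x*`, then no direction `v` has `⟨∇f_l(x*), v⟩ > 0` for every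
active index `l`. -/
theorem no_increasing_direction_at_local_max (m N : ℕ) (hN : 1 ≤ N)
    (f : Fin N → EuclideanSpace ℝ (Fin m) → ℝ)
    (hc : ∀ l, Continuous (f l)) (xs : EuclideanSpace ℝ (Fin m))
    (hdiff : ∀ l, DifferentiableAt ℝ (f l) xs)
    (hmax : IsLocalMax (fun y => ⨅ l, f l y) xs) :
    ¬ ∃ v : EuclideanSpace ℝ (Fin m),
      ∀ l : Fin N, f l xs = (⨅ l', f l' xs) → 0 < ⟪gradient (f l) xs, v⟫ := by
  rintro ⟨v, hv⟩
  have hNe : Nonempty (Fin N) := ⟨⟨0, hN⟩⟩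
  set G : EuclideanSpace ℝ (Fin m) → ℝ := fun y => ⨅ l, f l y with hGdef
  have hcurve : Continuous (fun t : ℝ => xs + t • v) := by continuity
  have hcurve0 : (fun t : ℝ => xs + t • v) 0 = xs := by simp
  have key : ∀ l, ∀ᶠ t in 𝓝[>] (0:ℝ), G xs < f l (xs + t • v) := by
    intro l
    have hle : G xs ≤ f l xs := ciInf_le (Set.finite_range _).bddBelow l
    rcases eq_or_lt_of_le hle with heq | hlt
    · -- active index
      have dpos : 0 < ⟪gradient (f l) xs, v⟫ := hv l heq.symm
      have hcd : HasDerivAt (fun t : ℝ => xs + t • v) v 0 := by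
        simpa using ((hasDerivAt_id (0:ℝ)).smul_const v).const_add xs
      have hfd : HasFDerivAt (f l)
          (InnerProductSpace.toDual ℝ _ (gradient (f l) xs)) xs :=
        ((hdiff l).hasGradientAt).hasFDerivAt
      have hd : HasDerivAt (fun t : ℝ => f l (xs + t • v))
          ⟪gradient (f l) xs, v⟫ 0 := by
        have hfd' : HasFDerivAt (f l)
            (InnerProductSpace.toDual ℝ _ (gradient (f l) xs))
            ((fun t : ℝ => xs + t • v) 0) := by rw [hcurve0]; exact hfd
        simpa [InnerProductSpace.toDual_apply_apply, Function.comp_def] using hfd'.comp_hasDerivAt 0 hcd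
      have hslope : Tendsto (slope (fun t : ℝ => f l (xs + t • v)) 0) (𝓝[≠] (0:ℝ))
          (𝓝 ⟪gradient (f l) xs, v⟫) := hasDerivAt_iff_tendsto_slope.1 hd
      have hslope' : Tendsto (slope (fun t : ℝ => f l (xs + t • v)) 0) (𝓝[>] (0:ℝ))
          (𝓝 ⟪gradient (f l) xs, v⟫) :=
        hslope.mono_left (nhdsWithin_mono _ (fun t ht => ne_of_gt ht))
      have hev : ∀ᶠ t in 𝓝[>] (0:ℝ),
          0 < slope (fun t : ℝ => f l (xs + t • v)) 0 t :=
        hslope'.eventually (eventually_gt_nhds dpos)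
      filter_upwards [hev, self_mem_nhdsWithin] with t ht htpos
      have htpos' : (0:ℝ) < t := htpos
      have hslt : 0 < t⁻¹ * (f l (xs + t • v) - f l xs) := by
        simpa [slope, hcurve0] using ht
      have h2 : 0 < f l (xs + t • v) - f l xs := by
        have hm := mul_pos htpos' hslt
        rwa [← mul_assoc, mul_inv_cancel₀ (ne_of_gt htpos'), one_mul] at hm
      calc G xs = f l xs := heq
        _ < f l (xs + t • v) := by linarith
    · -- inactive index
      have htend : Tendsto (fun t : ℝ => f l (xs + t • v)) (𝓝 0) (𝓝 (f l xs)) := by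
        have := ((hc l).comp hcurve).tendsto (0:ℝ)
        simpa [hcurve0, Function.comp_def] using this
      exact (htend.eventually (eventually_gt_nhds hlt)).filter_mono nhdsWithin_le_nhds
  have hall : ∀ᶠ t in 𝓝[>] (0:ℝ), ∀ l, G xs < f l (xs + t • v) := eventually_all.2 key
  have hmax' : ∀ᶠ t in 𝓝[>] (0:ℝ), G (xs + t • v) ≤ G xs := by
    have htend : Tendsto (fun t : ℝ => xs + t • v) (𝓝 0) (𝓝 xs) := by
      simpa [hcurve0] using hcurve.tendsto (0:ℝ)
    exact (htend.eventually hmax).filter_mono nhdsWithin_le_nhds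
  obtain ⟨t, ht1, ht2⟩ := (hall.and hmax').exists
  obtain ⟨i, hi⟩ := Finite.exists_min (fun l => f l (xs + t • v))
  have : G xs < G (xs + t • v) := lt_of_lt_of_le (ht1 i) (le_ciInf hi)
  linarith
end

section
/- Let f_1,…,f_N : ℝ^m → ℝ be continuous functions each differentiable at x*, let G(y) = min_{1 ≤ l ≤ N} f_l(y), and let L(x*) = {l : f_l(x*) = G(x*)}. If x* is a local maximum of G, then 0 lies in the convex hull of the finite set of active gradients {∇f_l(x*) : l ∈ L(x*)}. -/
open scoped RealInnerProductSpace

/-- If `x*` is a local maximum of `G(y) = min_l f_l(y)` with each `f_l` continuous and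
differentiable at `x*`, then `0` lies in the convex hull of the active gradients. -/
theorem zero_mem_convexHull_active_gradients (m N : ℕ) (hN : 1 ≤ N)
    (f : Fin N → EuclideanSpace ℝ (Fin m) → ℝ)
    (hc : ∀ l, Continuous (f l)) (xs : EuclideanSpace ℝ (Fin m))
    (hdiff : ∀ l, DifferentiableAt ℝ (f l) xs)
    (hmax : IsLocalMax (fun y => ⨅ l, f l y) xs) :
    (0 : EuclideanSpace ℝ (Fin m)) ∈ convexHull ℝ
      ((fun l => gradient (f l) xs) '' {l : Fin N | f l xs = ⨅ l', f l' xs}) := by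
  haveI : Nonempty (Fin N) := ⟨⟨0, hN⟩⟩
  by_contra h
  set S : Set (EuclideanSpace ℝ (Fin m)) :=
    (fun l => gradient (f l) xs) '' {l : Fin N | f l xs = ⨅ l', f l' xs} with hS
  have hSfin : S.Finite := Set.Finite.image _ (Set.toFinite _)
  have hclosed : IsClosed (convexHull ℝ S) := (Set.Finite.isCompact_convexHull (𝕜 := ℝ) hSfin).isClosed
  have h0 : (0 : EuclideanSpace ℝ (Fin m)) ∉ convexHull ℝ S := h
  obtain ⟨φ, u, hu0, hu⟩ :=
    geometric_hahn_banach_point_closed (convex_convexHull ℝ S) hclosed h0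
  have hupos : 0 < u := by simpa using hu0
  set v : EuclideanSpace ℝ (Fin m) := (InnerProductSpace.toDual ℝ _).symm φ with hv
  have hφv : ∀ w : EuclideanSpace ℝ (Fin m), ⟪v, w⟫ = φ w := fun w =>
    InnerProductSpace.toDual_symm_apply
  have hcurve : Continuous (fun t : ℝ => xs + t • v) :=
    continuous_const.add (continuous_id.smul continuous_const)
  have hcurve0 : xs + (0:ℝ) • v = xs := by simp
  have hall : ∀ l : Fin N, ∀ᶠ t in nhdsWithin (0:ℝ) (Set.Ioi 0),
      (⨅ l', f l' xs) < f l (xs + t • v) := by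
    intro l
    by_cases hl : f l xs = ⨅ l', f l' xs
    · have hline : HasDerivAt (fun t : ℝ => xs + t • v) v 0 := by
        simpa using ((hasDerivAt_id (0:ℝ)).smul_const v).const_add xs
      have hF : HasFDerivAt (f l)
          ((InnerProductSpace.toDual ℝ _) (gradient (f l) xs)) (xs + (0:ℝ) • v) := by
        rw [hcurve0]; exact (hdiff l).hasGradientAt.hasFDerivAt
      have hg : HasDerivAt (fun t : ℝ => f l (xs + t • v)) ⟪gradient (f l) xs, v⟫ 0 := by
        have hf := hF.comp_hasDerivAt 0 hline
        simpa [Function.comp_def] using hf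
      have hdpos : 0 < ⟪gradient (f l) xs, v⟫ := by
        have h1 : u < φ (gradient (f l) xs) :=
          hu _ (subset_convexHull ℝ S ⟨l, hl, rfl⟩)
        have h2 : u < ⟪gradient (f l) xs, v⟫ := by
          rw [real_inner_comm, hφv]; exact h1
        linarith
      have hslope := hasDerivAt_iff_tendsto_slope.mp hg
      have hev : ∀ᶠ t in nhdsWithin (0:ℝ) {(0:ℝ)}ᶜ,
          0 < slope (fun t : ℝ => f l (xs + t • v)) 0 t :=
        hslope.eventually (eventually_gt_nhds hdpos)
      have hmono : nhdsWithin (0:ℝ) (Set.Ioi 0) ≤ nhdsWithin (0:ℝ) {(0:ℝ)}ᶜ :=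
        nhdsWithin_mono _ (fun t ht => ne_of_gt ht)
      refine (hev.filter_mono hmono).mp ?_
      filter_upwards [self_mem_nhdsWithin] with t ht hst
      have ht' : (0:ℝ) < t := ht
      have hst' : 0 < t⁻¹ * (f l (xs + t • v) - f l xs) := by
        simpa [slope_def_field, slope, hcurve0] using hst
      have hd : 0 < f l (xs + t • v) - f l xs := by
        have h3 := mul_pos ht' hst'
        rwa [mul_inv_cancel_left₀ (ne_of_gt ht')] at h3
      linarith [hl ▸ hd]
    · have hle : (⨅ l', f l' xs) ≤ f l xs := ciInf_le (Set.finite_range _).bddBelow l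
      have hlt : (⨅ l', f l' xs) < f l xs := lt_of_le_of_ne hle (Ne.symm hl)
      have htend : Filter.Tendsto (fun t : ℝ => f l (xs + t • v)) (nhds 0)
          (nhds (f l xs)) := by
        have h4 := ((hc l).comp hcurve).tendsto 0
        simpa [Function.comp_def, hcurve0] using h4
      exact (htend.eventually (eventually_gt_nhds hlt)).filter_mono nhdsWithin_le_nhds
  have hall' : ∀ᶠ t in nhdsWithin (0:ℝ) (Set.Ioi 0),
      ∀ l, (⨅ l', f l' xs) < f l (xs + t • v) := Filter.eventually_all.mpr hall
  have htendc : Filter.Tendsto (fun t : ℝ => xs + t • v) (nhds 0) (nhds xs) := by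
    have h5 := hcurve.tendsto 0
    simpa [hcurve0] using h5
  have hmax2 : ∀ᶠ y in nhds xs, (⨅ l, f l y) ≤ ⨅ l, f l xs := hmax
  have hmax' : ∀ᶠ t in nhdsWithin (0:ℝ) (Set.Ioi 0),
      (⨅ l, f l (xs + t • v)) ≤ ⨅ l', f l' xs :=
    (htendc.eventually hmax2).filter_mono nhdsWithin_le_nhds
  obtain ⟨t, h1, h2⟩ := (hall'.and hmax').exists
  obtain ⟨l₀, hl₀⟩ := Finite.exists_min (fun l => f l (xs + t • v))
  have heq : (⨅ l, f l (xs + t • v)) = f l₀ (xs + t • v) :=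
    le_antisymm (ciInf_le (Set.finite_range _).bddBelow l₀) (le_ciInf hl₀)
  have h6 := h1 l₀
  rw [← heq] at h6
  linarith
end

section
/- Let S be a nonempty finite index set and for each l ∈ S let f_l : ℝ^m → ℝ be a convex function differentiable at a point x'. If 0 lies in the convex hull of {∇f_l(x') : l ∈ S}, then for every x ∈ ℝ^m there exists l* ∈ S with ⟨∇f_{l*}(x'), x − x'⟩ ≥ 0, and hence f_{l*}(x) ≥ f_{l*}(x'). -/
open scoped RealInnerProductSpace

open Filter Set Topology

/-- Gradient inequality for convex functions. -/
lemma convex_grad_ineq {E : Type*} [NormedAddCommGroup E] [InnerProductSpace ℝ E]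
    [CompleteSpace E]
    (f : E → ℝ) (hconv : ConvexOn ℝ Set.univ f) (x' : E)
    (hd : DifferentiableAt ℝ f x') (x : E) :
    f x' + ⟪gradient f x', x - x'⟫ ≤ f x := by
  set v := x - x' with hv
  have hGrad : HasGradientAt f (gradient f x') x' := hd.hasGradientAt
  have hFD : HasFDerivAt f ((InnerProductSpace.toDual ℝ E) (gradient f x')) x' :=
    hasGradientAt_iff_hasFDerivAt.mp hGrad
  have hline : HasDerivAt (fun t : ℝ => x' + t • v) v 0 := by
    simpa using ((hasDerivAt_id (0:ℝ)).smul_const v).const_add x'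
  have hφ : HasDerivAt (fun t : ℝ => f (x' + t • v)) ⟪gradient f x', v⟫ 0 := by
    have hFD' : HasFDerivAt f ((InnerProductSpace.toDual ℝ E) (gradient f x'))
        (x' + (0:ℝ) • v) := by simpa using hFD
    have := hFD'.comp_hasDerivAt (x := (0:ℝ)) hline
    exact this
  have htend : Tendsto (slope (fun t : ℝ => f (x' + t • v)) 0) (𝓝[≠] 0)
      (𝓝 ⟪gradient f x', v⟫) := hasDerivAt_iff_tendsto_slope.mp hφ
  have htend' : Tendsto (slope (fun t : ℝ => f (x' + t • v)) 0) (𝓝[>] 0)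
      (𝓝 ⟪gradient f x', v⟫) :=
    htend.mono_left (nhdsWithin_mono _ (fun t ht => ne_of_gt ht))
  have hle : ⟪gradient f x', v⟫ ≤ f x - f x' := by
    refine le_of_tendsto htend' ?_
    filter_upwards [Ioc_mem_nhdsGT_of_mem (Set.left_mem_Ico.2 one_pos)] with t ht
    obtain ⟨ht0, ht1⟩ := ht
    have hx_eq : x' + t • v = (1 - t) • x' + t • x := by
      rw [hv]; module
    have hc := hconv.2 (Set.mem_univ x') (Set.mem_univ x)
      (by linarith : (0:ℝ) ≤ 1 - t) ht0.le (by ring)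
    have hft : f (x' + t • v) ≤ (1 - t) * f x' + t * f x := by
      rw [hx_eq]; simpa [smul_eq_mul] using hc
    have h00 : f (x' + (0:ℝ) • v) = f x' := by simp
    rw [slope_def_field, h00, sub_zero, div_le_iff₀ ht0]
    nlinarith
  linarith

/-- If `0` lies in the convex hull of the gradients at `x'` of finitely many convex
functions, then for every `x` some member `l*` of the family satisfies
`⟨∇f_{l*}(x'), x - x'⟩ ≥ 0`, and hence `f_{l*}(x) ≥ f_{l*}(x')`. -/
theorem convexHull_zero_gives_nondecreasing_direction (m N : ℕ)
    (S : Finset (Fin N)) (hS : S.Nonempty)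
    (f : Fin N → EuclideanSpace ℝ (Fin m) → ℝ)
    (hconv : ∀ l ∈ S, ConvexOn ℝ Set.univ (f l))
    (x' : EuclideanSpace ℝ (Fin m))
    (hdiff : ∀ l ∈ S, DifferentiableAt ℝ (f l) x')
    (h0 : (0 : EuclideanSpace ℝ (Fin m)) ∈ convexHull ℝ
      ((fun l => gradient (f l) x') '' (S : Set (Fin N)))) :
    ∀ x : EuclideanSpace ℝ (Fin m), ∃ l ∈ S,
      0 ≤ ⟪gradient (f l) x', x - x'⟫ ∧ f l x' ≤ f l x := by
  classical
  intro x
  set T : Finset (EuclideanSpace ℝ (Fin m)) := S.image fun l => gradient (f l) x' with hT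
  have himg : ((fun l => gradient (f l) x') '' (S : Set (Fin N))) = (T : Set _) := by
    simp [hT]
  rw [himg, Finset.convexHull_eq] at h0
  obtain ⟨w, hw0, hw1, hwsum⟩ := h0
  rw [Finset.centerMass_eq_of_sum_1 _ _ hw1] at hwsum
  by_contra hcon
  push_neg at hcon
  have hneg : ∀ l ∈ S, ⟪gradient (f l) x', x - x'⟫ < 0 := by
    intro l hl
    rcases lt_or_ge ⟪gradient (f l) x', x - x'⟫ 0 with h | h
    · exact h
    · have hkey := convex_grad_ineq (f l) (hconv l hl) x' (hdiff l hl) x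
      have := hcon l hl h
      linarith
  have hnegT : ∀ y ∈ T, ⟪y, x - x'⟫ < 0 := by
    intro y hy
    obtain ⟨l, hl, rfl⟩ := Finset.mem_image.mp (hT ▸ hy)
    exact hneg l hl
  have hsum0 : ∑ y ∈ T, w y * ⟪y, x - x'⟫ = 0 := by
    have h1 : ⟪∑ i ∈ T, w i • (id i : EuclideanSpace ℝ (Fin m)), x - x'⟫
        = ∑ y ∈ T, w y * ⟪y, x - x'⟫ := by
      rw [sum_inner]
      exact Finset.sum_congr rfl fun y _ => by rw [id_eq, real_inner_smul_left]
    rw [← h1, hwsum, inner_zero_left]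
  obtain ⟨y0, hy0, hwy0⟩ : ∃ y ∈ T, 0 < w y := by
    by_contra h
    push_neg at h
    have : ∑ y ∈ T, w y ≤ 0 := Finset.sum_nonpos fun y hy => h y hy
    linarith
  have hlt : ∑ y ∈ T, w y * ⟪y, x - x'⟫ < 0 := by
    have : ∑ y ∈ T, w y * ⟪y, x - x'⟫ < ∑ y ∈ T, (0:ℝ) := by
      refine Finset.sum_lt_sum (fun y hy => ?_) ⟨y0, hy0, ?_⟩
      · exact mul_nonpos_of_nonneg_of_nonpos (hw0 y hy) (hnegT y hy).le
      · exact mul_neg_of_pos_of_neg hwy0 (hnegT y0 hy0)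
    simpa using this
  linarith
end
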